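/- A sequence X_1, X_2, ... of {0,1}-valued random variables is exchangeable if and only if there exists a probability measure μ on [0,1] such that the sequence is distributed as a mixture of i.i.d. Bernoulli(p) sequences with p drawn from μ (de Finetti's theorem). -/

import Mathlib

open MeasureTheory Set Filter Topology

namespace DeFinettiAux

lemma sum_range_split {M : Type*} [AddCommMonoid M] (f : ℕ → M) {k n : ℕ} (h : k ≤ n) :
    ∑ i ∈ Finset.range n, f i
      = ∑ i ∈ Finset.range k, f i + ∑ i ∈ Finset.range (n - k), f (k + i) := by
  have h1 := Finset.sum_range_add f k (n - k)
  rw [show k + (n - k) = n by omega] at h1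
  exact h1


/-- helper: sum over range of indicator of `< k` -/
lemma sum_range_ite {n k : ℕ} (hk : k ≤ n) :
    ∑ i ∈ Finset.range n, (if i < k then (1:ℕ) else 0) = k := by
  induction n with
  | zero =>
    have : k = 0 := by omega
    simp [this]
  | succ n ih =>
    rw [Finset.sum_range_succ]
    rcases Nat.lt_or_ge n k with h | h
    · have hk' : k = n + 1 := by omega
      subst hk'
      rw [Finset.sum_congr rfl (fun x hx => if_pos (by
        simp only [Finset.mem_range] at hx; omega))]
      simp
    · rw [ih h, if_neg (by omega), add_zero]

/-- number of `true`s in a Boolean vector -/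
def cnt {n : ℕ} (a : Fin n → Bool) : ℕ := (Finset.univ.filter (fun i => a i = true)).card

lemma cnt_le {n : ℕ} (a : Fin n → Bool) : cnt a ≤ n := by
  simpa [cnt] using (Finset.card_filter_le Finset.univ (fun i => a i = true))

lemma cnt_eq_sum {n : ℕ} (a : Fin n → Bool) :
    cnt a = ∑ i : Fin n, (if a i = true then (1:ℕ) else 0) := by
  rw [cnt, Finset.card_filter]

lemma cnt_pat {n k : ℕ} (hk : k ≤ n) :
    cnt (fun i : Fin n => decide (i.val < k)) = k := by
  rw [cnt_eq_sum]
  simp only [decide_eq_true_eq]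
  rw [Fin.sum_univ_eq_sum_range (fun i => if i < k then (1:ℕ) else 0) n]
  exact sum_range_ite hk

lemma exists_perm {n : ℕ} (a b : Fin n → Bool) (h : cnt a = cnt b) :
    ∃ π : Equiv.Perm (Fin n), a = b ∘ π := by
  classical
  have hcard : Fintype.card {i // a i = true} = Fintype.card {i // b i = true} := by
    simpa [Fintype.card_subtype, cnt] using h
  have hcard' : Fintype.card {i // ¬ a i = true} = Fintype.card {i // ¬ b i = true} := by
    rw [Fintype.card_subtype_compl, Fintype.card_subtype_compl, hcard]
  let e1 := Fintype.equivOfCardEq hcard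
  let e2 := Fintype.equivOfCardEq hcard'
  refine ⟨(Equiv.sumCompl (fun i => a i = true)).symm.trans
      ((e1.sumCongr e2).trans (Equiv.sumCompl (fun i => b i = true))), ?_⟩
  funext i
  by_cases hi : a i = true
  · have hs : (Equiv.sumCompl fun j => a j = true).symm i = Sum.inl ⟨i, hi⟩ :=
      Equiv.sumCompl_symm_apply_of_pos (p := fun j => a j = true) hi
    simp only [Function.comp_apply, Equiv.trans_apply, hs, Equiv.sumCongr_apply,
      Sum.map_inl, Equiv.sumCompl_apply_inl]
    rw [hi, (e1 ⟨i, hi⟩).2]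
  · have hs : (Equiv.sumCompl fun j => a j = true).symm i = Sum.inr ⟨i, hi⟩ :=
      Equiv.sumCompl_symm_apply_of_neg (p := fun j => a j = true) hi
    simp only [Function.comp_apply, Equiv.trans_apply, hs, Equiv.sumCongr_apply,
      Sum.map_inr, Equiv.sumCompl_apply_inr]
    have h2 : ¬ b ((e2 ⟨i, hi⟩ : {j // ¬ b j = true}) : Fin n) = true := (e2 ⟨i, hi⟩).2
    rw [Bool.not_eq_true] at hi h2
    rw [hi, h2]

/-- summing a function of the count over all boolean vectors -/
lemma sum_cnt {N : ℕ} (f : ℕ → ℝ) :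
    ∑ a : Fin N → Bool, f (cnt a) =
      ∑ m ∈ Finset.range (N + 1), (N.choose m : ℝ) * f m := by
  classical
  have h1 : ∑ a : Fin N → Bool, f (cnt a) = ∑ s : Finset (Fin N), f s.card := by
    apply Finset.sum_nbij' (i := fun a => Finset.univ.filter (fun i => a i = true))
      (j := fun s => (fun i => decide (i ∈ s)))
    · intro a _; exact Finset.mem_univ _
    · intro s _; exact Finset.mem_univ _
    · intro a _; funext i; by_cases h : a i = true <;> simp [h]
    · intro s _; ext i; simp
    · intro a _; rfl
  rw [h1]
  have h2 : (Finset.univ : Finset (Finset (Fin N))) = Finset.univ.powerset := by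
    rw [Finset.powerset_univ]
  rw [h2, Finset.sum_powerset]
  simp only [Finset.card_univ, Fintype.card_fin]
  refine Finset.sum_congr rfl (fun m _ => ?_)
  rw [Finset.sum_congr rfl (fun s hs => by
    rw [(Finset.mem_powersetCard.1 hs).2]), Finset.sum_const, Finset.card_powersetCard,
    Finset.card_univ, Fintype.card_fin, nsmul_eq_mul]

/-- the key descFactorial/choose identity -/
lemma choose_descFactorial (n k m : ℕ) (h : k + m ≤ n) :
    n.choose (k + m) * (k + m).descFactorial k = (n - k).choose m * n.descFactorial k := by
  have hf : ∀ x : ℕ, 0 < x.factorial := Nat.factorial_pos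
  apply Nat.eq_of_mul_eq_mul_right (Nat.mul_pos (hf m) (hf (n - (k + m))))
  have e1 : n.choose (k + m) * (k + m).descFactorial k * (m.factorial * (n - (k + m)).factorial)
      = n.factorial := by
    have h1 : (m.factorial * ((k+m).descFactorial k)) = (k+m).factorial := by
      have := Nat.factorial_mul_descFactorial (show k ≤ k + m by omega)
      simpa using this
    calc n.choose (k + m) * (k + m).descFactorial k * (m.factorial * (n - (k + m)).factorial)
        = (n.choose (k+m) * ((k+m).descFactorial k * m.factorial)) * (n - (k+m)).factorial := by
          ring
      _ = n.choose (k+m) * (k+m).factorial * (n - (k+m)).factorial := by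
          rw [mul_comm ((k+m).descFactorial k) m.factorial, h1]
      _ = n.factorial := Nat.choose_mul_factorial_mul_factorial h
  have e2 : (n - k).choose m * n.descFactorial k * (m.factorial * (n - (k + m)).factorial)
      = n.factorial := by
    have hkn : k ≤ n := le_trans (Nat.le_add_right k m) h
    have hmnk : m ≤ n - k := by omega
    have h2 : (n - k).choose m * m.factorial * (n - k - m).factorial = (n - k).factorial :=
      Nat.choose_mul_factorial_mul_factorial hmnk
    have h3 : (n - k).factorial * n.descFactorial k = n.factorial :=
      Nat.factorial_mul_descFactorial hkn
    have h4 : n - k - m = n - (k + m) := by omega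
    calc (n - k).choose m * n.descFactorial k * (m.factorial * (n - (k + m)).factorial)
        = ((n - k).choose m * m.factorial * (n - k - m).factorial) * n.descFactorial k := by
          rw [h4]; ring
      _ = (n - k).factorial * n.descFactorial k := by rw [h2]
      _ = n.factorial := h3
  rw [e1, e2]

lemma descFactorial_pos {k n : ℕ} (h : k ≤ n) : 0 < n.descFactorial k := by
  rcases Nat.eq_zero_or_pos (n.descFactorial k) with h0 | h0
  · rw [Nat.descFactorial_eq_zero_iff_lt] at h0; omega
  · exact h0



section Meas

variable {Ω : Type*} [MeasurableSpace Ω] (μ : Measure Ω) [IsProbabilityMeasure μ]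
  (X : ℕ → Ω → Bool)

/-- the cylinder event determined by a boolean pattern -/
def S {n : ℕ} (a : Fin n → Bool) : Set Ω := {ω | ∀ i : Fin n, X i.val ω = a i}

variable {X}

lemma measurableSet_S (hX : ∀ i, Measurable (X i)) {n : ℕ} (a : Fin n → Bool) :
    MeasurableSet (S X a) := by
  have : S X a = ⋂ i : Fin n, (X i.val) ⁻¹' {a i} := by
    ext ω; simp [S, Set.mem_iInter]
  rw [this]
  exact MeasurableSet.iInter (fun i => (hX i.val) (measurableSet_singleton _))

/-- exchangeability hypothesis abbreviation -/
def Exch (μ : Measure Ω) (X : ℕ → Ω → Bool) : Prop :=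
  ∀ (n : ℕ) (π : Equiv.Perm (Fin n)),
    Measure.map (fun ω => fun i : Fin n => X (π i : Fin n).val ω) μ
      = Measure.map (fun ω => fun i : Fin n => X i.val ω) μ

variable {μ}

lemma S_perm (hX : ∀ i, Measurable (X i)) (h : Exch μ X) {n : ℕ} (b : Fin n → Bool)
    (π : Equiv.Perm (Fin n)) : μ (S X (b ∘ π)) = μ (S X b) := by
  have hmble : Measurable (fun ω => fun i : Fin n => X i.val ω) :=
    measurable_pi_lambda _ (fun i => hX i.val)
  have hmble' : Measurable (fun ω => fun i : Fin n => X (π.symm i).val ω) :=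
    measurable_pi_lambda _ (fun i => hX _)
  have hs : MeasurableSet {b} := measurableSet_singleton b
  have hh := congrArg (fun m : Measure (Fin n → Bool) => m {b}) (h n π.symm)
  rw [Measure.map_apply hmble' hs, Measure.map_apply hmble hs] at hh
  have p1 : (fun ω => fun i : Fin n => X (π.symm i).val ω) ⁻¹' {b} = S X (b ∘ π) := by
    ext ω
    simp only [Set.mem_preimage, Set.mem_singleton_iff, funext_iff, S, Set.mem_setOf_eq,
      Function.comp_apply]
    constructor
    · intro hω i
      have := hω (π i); simpa using this
    · intro hω i
      have := hω (π.symm i); simpa using this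
  have p2 : (fun ω => fun i : Fin n => X i.val ω) ⁻¹' {b} = S X b := by
    ext ω
    simp [Set.mem_preimage, funext_iff, S]
  rw [p1, p2] at hh
  exact hh

lemma S_cnt (hX : ∀ i, Measurable (X i)) (h : Exch μ X) {n : ℕ} (a b : Fin n → Bool)
    (hab : cnt a = cnt b) : μ (S X a) = μ (S X b) := by
  obtain ⟨π, rfl⟩ := exists_perm a b hab
  exact S_perm hX h b π

variable (μ X) in
/-- probability that the first `k` of `n` coordinates are `true` and the rest `false` -/
noncomputable def t (n k : ℕ) : ℝ := (μ (S X (fun i : Fin n => decide (i.val < k)))).toReal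

lemma t_nonneg (n k : ℕ) : 0 ≤ t μ X n k := ENNReal.toReal_nonneg

lemma S_eq_t (hX : ∀ i, Measurable (X i)) (h : Exch μ X) {n : ℕ} (a : Fin n → Bool) :
    (μ (S X a)).toReal = t μ X n (cnt a) := by
  rw [t, S_cnt hX h a _ (by rw [cnt_pat (cnt_le a)])]

lemma sum_S_one (hX : ∀ i, Measurable (X i)) (n : ℕ) :
    ∑ a : Fin n → Bool, (μ (S X a)).toReal = 1 := by
  classical
  have hdisj : Pairwise (Function.onFun Disjoint fun a : Fin n → Bool => S X a) := by
    intro a b hab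
    rw [Function.onFun, Set.disjoint_left]
    intro ω ha hb
    apply hab
    funext i
    rw [← ha i, ← hb i]
  have hun : (⋃ a : Fin n → Bool, S X a) = Set.univ := by
    ext ω
    simp only [Set.mem_iUnion, Set.mem_univ, iff_true]
    exact ⟨fun i => X i.val ω, fun i => rfl⟩
  have hm := measure_iUnion (μ := μ) hdisj (fun a => measurableSet_S hX a)
  rw [hun, measure_univ, tsum_fintype] at hm
  have : (∑ a : Fin n → Bool, μ (S X a)).toReal = 1 := by rw [← hm]; simp
  rw [← this, ENNReal.toReal_sum (fun a _ => measure_ne_top μ _)]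

/-- property (ii): total mass one -/
lemma sum_w_one (hX : ∀ i, Measurable (X i)) (h : Exch μ X) (n : ℕ) :
    ∑ j ∈ Finset.range (n + 1), (n.choose j : ℝ) * t μ X n j = 1 := by
  rw [← sum_cnt (fun m => t μ X n m), ← sum_S_one (μ := μ) hX n]
  exact Finset.sum_congr rfl (fun a _ => (S_eq_t hX h a).symm)

/-- extension of a tail pattern by a prefix of `true`s -/
def ext {n k : ℕ} (hkn : k ≤ n) (c : Fin (n - k) → Bool) : Fin n → Bool :=
  fun i => if h : i.val < k then true else c ⟨i.val - k, by omega⟩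

lemma ext_inj {n k : ℕ} (hkn : k ≤ n) : Function.Injective (ext hkn) := by
  intro c c' hcc
  funext j
  have := congrFun hcc ⟨k + j.val, by omega⟩
  simp only [ext] at this
  rw [dif_neg (by omega), dif_neg (by omega)] at this
  simpa [Nat.add_sub_cancel_left] using this

lemma cnt_ext {n k : ℕ} (hkn : k ≤ n) (c : Fin (n - k) → Bool) :
    cnt (ext hkn c) = k + cnt c := by
  classical
  rw [cnt_eq_sum]
  set g : ℕ → ℕ := fun j => if j < k then 1 else
    (if hj : j - k < n - k then (if c ⟨j - k, hj⟩ then 1 else 0) else 0) with hg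
  have hgv : ∀ i : Fin n, (if ext hkn c i = true then (1:ℕ) else 0) = g i.val := by
    intro i
    by_cases h : i.val < k
    · simp [ext, g, h]
    · have hj : i.val - k < n - k := by omega
      simp only [ext, dif_neg h, g, if_neg h, dif_pos hj]
  rw [Finset.sum_congr rfl (fun i _ => hgv i), Fin.sum_univ_eq_sum_range g n,
    sum_range_split g hkn]
  congr 1
  · rw [show ∑ x ∈ Finset.range k, g x = ∑ _x ∈ Finset.range k, 1 from
      Finset.sum_congr rfl (fun x hx => by
        simp only [Finset.mem_range] at hx
        simp [g, hx])]
    simp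
  · set g' : ℕ → ℕ := fun j => if hj : j < n - k then (if c ⟨j, hj⟩ then 1 else 0) else 0
      with hg'
    have e1 : ∀ x ∈ Finset.range (n - k), g (k + x) = g' x := by
      intro x hx
      simp only [Finset.mem_range] at hx
      simp only [g, g', if_neg (by omega : ¬ k + x < k), Nat.add_sub_cancel_left, dif_pos hx]
    rw [Finset.sum_congr rfl e1, cnt_eq_sum]
    rw [Finset.sum_congr rfl (fun (i : Fin (n - k)) _ =>
      (by simp only [g', dif_pos i.isLt] :
        (if c i = true then (1:ℕ) else 0) = g' i.val))]
    exact (Fin.sum_univ_eq_sum_range (fun j => g' j) (n - k)).symm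

/-- property (iii): prefix moments -/
lemma prefix_sum (hX : ∀ i, Measurable (X i)) (h : Exch μ X) {k n : ℕ} (hkn : k ≤ n) :
    ∑ m ∈ Finset.range (n - k + 1), ((n - k).choose m : ℝ) * t μ X n (k + m) = t μ X k k := by
  classical
  have hun : S X (fun i : Fin k => decide (i.val < k)) = ⋃ c : Fin (n - k) → Bool, S X (ext hkn c) := by
    ext ω
    simp only [S, Set.mem_setOf_eq, Set.mem_iUnion]
    constructor
    · intro hω
      refine ⟨fun j => X (k + j.val) ω, fun i => ?_⟩
      by_cases hik : i.val < k
      · rw [ext]; rw [dif_pos hik]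
        simpa [hik] using hω ⟨i.val, hik⟩
      · rw [ext, dif_neg hik]
        show X i.val ω = X (k + (i.val - k)) ω
        congr 1
        omega
    · rintro ⟨c, hc⟩ i
      have := hc ⟨i.val, by omega⟩
      rw [ext] at this
      rw [dif_pos i.isLt] at this
      simpa [i.isLt] using this
  have hdisj : Pairwise (Function.onFun Disjoint fun c : Fin (n - k) → Bool => S X (ext hkn c)) := by
    intro c c' hcc
    rw [Function.onFun, Set.disjoint_left]
    intro ω hc hc'
    apply hcc
    apply ext_inj hkn
    funext i
    rw [← hc i, ← hc' i]
  have hm := measure_iUnion (μ := μ) hdisj (fun c => measurableSet_S hX _)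
  rw [← hun, tsum_fintype] at hm
  have h2 : t μ X k k = ∑ c : Fin (n - k) → Bool, (μ (S X (ext hkn c))).toReal := by
    rw [t, hm, ENNReal.toReal_sum (fun c _ => measure_ne_top μ _)]
  rw [h2]
  have h3 : ∀ c : Fin (n - k) → Bool, (μ (S X (ext hkn c))).toReal = t μ X n (k + cnt c) := by
    intro c
    rw [S_eq_t hX h, cnt_ext]
  rw [Finset.sum_congr rfl (fun c _ => h3 c), sum_cnt (fun m => t μ X n (k + m))]

/-- property: recursion -/
lemma t_rec (hX : ∀ i, Measurable (X i)) (h : Exch μ X) {k n : ℕ} (hkn : k ≤ n) :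
    t μ X n k = t μ X (n + 1) (k + 1) + t μ X (n + 1) k := by
  classical
  set b' : Fin (n+1) → Bool := fun i => decide (i.val < k ∨ i.val = n) with hb'
  have hcnt : cnt b' = k + 1 := by
    rw [cnt_eq_sum, Fin.sum_univ_eq_sum_range
      (fun j => if (decide (j < k ∨ j = n)) = true then 1 else 0) (n+1),
      Finset.sum_range_succ]
    simp only [decide_eq_true_eq]
    rw [if_pos (show n < k ∨ True from Or.inr trivial)]
    congr 1
    rw [Finset.sum_congr rfl (fun i hi => by
      simp only [Finset.mem_range] at hi
      have : (i < k ∨ i = n) ↔ i < k := by omega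
      rw [if_congr this rfl rfl])]
    exact sum_range_ite hkn
  have hsplit : S X (fun i : Fin n => decide (i.val < k)) = S X b' ∪ S X (fun i : Fin (n+1) => decide (i.val < k)) := by
    ext ω
    simp only [S, Set.mem_setOf_eq, Set.mem_union]
    constructor
    · intro hω
      by_cases hn : X n ω = true
      · left
        intro i
        simp only [hb']
        rcases Nat.lt_or_ge i.val n with hi | hi
        · have hthis := hω ⟨i.val, hi⟩
          simp only at hthis
          rw [hthis]
          simp only [decide_eq_decide]
          omega
        · have hieq : i.val = n := by omega
          rw [hieq, hn]
          simp
      · right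
        intro i
        rw [Bool.not_eq_true] at hn
        rcases Nat.lt_or_ge i.val n with hi | hi
        · have hthis := hω ⟨i.val, hi⟩
          simpa using hthis
        · have hieq : i.val = n := by omega
          rw [hieq, hn]
          have hnk2 : ¬ n < k := by omega
          simp [hnk2]
    · intro hω i
      rcases hω with hω | hω
      · have hthis := hω ⟨i.val, by omega⟩
        simp only [hb'] at hthis
        rw [hthis]
        simp only [decide_eq_decide]
        omega
      · have hthis := hω ⟨i.val, by omega⟩
        simpa using hthis
  have hdisj : Disjoint (S X b') (S X (fun i : Fin (n+1) => decide (i.val < k))) := by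
    rw [Set.disjoint_left]
    intro ω h1 h2
    have hx1 : X n ω = true := by
      have e1 := h1 ⟨n, by omega⟩
      simp only [hb'] at e1
      rw [e1]
      simp
    have hx2 : X n ω = false := by
      have e2 := h2 ⟨n, by omega⟩
      simp only at e2
      rw [e2]
      simp [show ¬ n < k by omega]
    rw [hx1] at hx2
    exact Bool.noConfusion hx2
  have hm : μ (S X (fun i : Fin n => decide (i.val < k)))
      = μ (S X b') + μ (S X (fun i : Fin (n+1) => decide (i.val < k))) := by
    rw [hsplit, measure_union hdisj (measurableSet_S hX _)]
  have e1 : (μ (S X b')).toReal = t μ X (n+1) (k+1) := by rw [S_eq_t hX h b', hcnt]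
  have e2 : (μ (S X (fun i : Fin (n+1) => decide (i.val < k)))).toReal = t μ X (n+1) k := rfl
  show (μ (S X (fun i : Fin n => decide (i.val < k)))).toReal = _
  rw [hm, ENNReal.toReal_add (measure_ne_top μ _) (measure_ne_top μ _), e1, e2]

end Meas


section Analysis

variable (t : ℕ → ℕ → ℝ)

/-- discrete weights -/
noncomputable def w (n j : ℕ) : ℝ := (n.choose j : ℝ) * t n j

/-- empirical CDF -/
noncomputable def F (n : ℕ) (x : ℝ) : ℝ :=
  ∑ j ∈ Finset.range (n + 1), if ((j : ℝ) / n ≤ x) then w t n j else 0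

variable {t}
variable (h0 : ∀ n j, 0 ≤ t n j)
    (h1 : ∀ n, ∑ j ∈ Finset.range (n+1), (n.choose j : ℝ) * t n j = 1)

section Fbasic
include h0

lemma w_nonneg (n j : ℕ) : 0 ≤ w t n j :=
  mul_nonneg (Nat.cast_nonneg _) (h0 n j)

lemma F_mono (n : ℕ) : Monotone (F t n) := by
  intro x y hxy
  apply Finset.sum_le_sum
  intro j _
  by_cases h : (j : ℝ) / n ≤ x
  · rw [if_pos h, if_pos (le_trans h hxy)]
  · rw [if_neg h]
    by_cases h' : (j : ℝ) / n ≤ y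
    · rw [if_pos h']; exact w_nonneg h0 n j
    · rw [if_neg h']

lemma F_nonneg (n : ℕ) (x : ℝ) : 0 ≤ F t n x := by
  apply Finset.sum_nonneg
  intro j _
  by_cases h : (j : ℝ) / n ≤ x
  · rw [if_pos h]; exact w_nonneg h0 n j
  · rw [if_neg h]

omit h0 in
lemma div_mem_le_one {n j : ℕ} (hj : j ∈ Finset.range (n+1)) : (j:ℝ)/n ≤ 1 := by
  simp only [Finset.mem_range] at hj
  rcases Nat.eq_zero_or_pos n with hn | hn
  · subst hn
    have : j = 0 := by omega
    simp [this]
  · rw [div_le_one (by exact_mod_cast hn)]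
    exact_mod_cast Nat.lt_succ_iff.1 hj

include h1 in
lemma sum_w_eq_one (n : ℕ) : ∑ j ∈ Finset.range (n+1), w t n j = 1 := by
  simpa [w] using h1 n

include h1 in
lemma F_le_one (n : ℕ) (x : ℝ) : F t n x ≤ 1 := by
  rw [← sum_w_eq_one h0 h1 n]
  apply Finset.sum_le_sum
  intro j hj
  by_cases h : (j : ℝ) / n ≤ x
  · rw [if_pos h]
  · rw [if_neg h]; exact w_nonneg h0 n j

omit h0 in
lemma F_zero (n : ℕ) {x : ℝ} (hx : x < 0) : F t n x = 0 := by
  apply Finset.sum_eq_zero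
  intro j _
  rw [if_neg]
  intro hc
  have : (0:ℝ) ≤ (j:ℝ)/n := div_nonneg (Nat.cast_nonneg _) (Nat.cast_nonneg _)
  linarith

include h1 in
lemma F_one (n : ℕ) {x : ℝ} (hx : 1 ≤ x) : F t n x = 1 := by
  rw [← sum_w_eq_one h0 h1 n]
  apply Finset.sum_congr rfl
  intro j hj
  rw [if_pos (le_trans (div_mem_le_one hj) hx)]

include h1 in
lemma one_sub_F (n : ℕ) (s : ℝ) :
    1 - F t n s = ∑ j ∈ Finset.range (n + 1), if ((j : ℝ) / n ≤ s) then 0 else w t n j := by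
  rw [show (1:ℝ) = ∑ j ∈ Finset.range (n+1), w t n j from (sum_w_eq_one h0 h1 n).symm,
    F, ← Finset.sum_sub_distrib]
  apply Finset.sum_congr rfl
  intro j _
  by_cases h : (j:ℝ)/n ≤ s
  · rw [if_pos h, if_pos h, sub_self]
  · rw [if_neg h, if_neg h, sub_zero]

end Fbasic

/-- integral of a step function against k s^(k-1) -/
lemma step_integral {k : ℕ} (hk : 1 ≤ k) {c : ℝ} (hc0 : 0 ≤ c) (hc1 : c ≤ 1) (w0 : ℝ) :
    ∫ s in Ioo (0:ℝ) 1, (if c ≤ s then 0 else (k:ℝ) * s^(k-1) * w0) = w0 * c^k := by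
  have hind : (fun s : ℝ => if c ≤ s then 0 else (k:ℝ) * s^(k-1) * w0)
      = (Iio c).indicator (fun s => (k:ℝ) * s^(k-1) * w0) := by
    funext s
    rw [Set.indicator_apply]
    by_cases h : c ≤ s
    · rw [if_pos h, if_neg (by simpa [Set.mem_Iio] using not_lt.2 h)]
    · rw [if_neg h, if_pos (by simpa [Set.mem_Iio] using not_le.1 h)]
  rw [hind, integral_indicator measurableSet_Iio, Measure.restrict_restrict measurableSet_Iio]
  have hset : Iio c ∩ Ioo (0:ℝ) 1 = Ioo 0 c := by
    ext s
    simp only [Set.mem_inter_iff, Set.mem_Iio, Set.mem_Ioo]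
    constructor
    · rintro ⟨h1, h2, h3⟩; exact ⟨h2, h1⟩
    · rintro ⟨h1, h2⟩; exact ⟨h2, h1, lt_of_lt_of_le h2 hc1⟩
  rw [hset, ← integral_Ioc_eq_integral_Ioo, ← intervalIntegral.integral_of_le hc0]
  have hfun : ∀ s : ℝ, (k:ℝ) * s^(k-1) * w0 = ((k:ℝ) * w0) * s^(k-1) := fun s => by ring
  simp_rw [hfun]
  rw [intervalIntegral.integral_const_mul, integral_pow]
  have hkk : k - 1 + 1 = k := Nat.sub_add_cancel hk
  rw [hkk]
  have hc : ((k - 1 : ℕ) : ℝ) + 1 = (k : ℝ) := by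
    rw [Nat.cast_sub hk]; push_cast; ring
  rw [hc, zero_pow (by omega : k ≠ 0)]
  have hkne : (k:ℝ) ≠ 0 := by positivity
  field_simp
  ring

lemma step_integrable {k : ℕ} (c : ℝ) (w0 : ℝ) :
    Integrable (fun s : ℝ => if c ≤ s then 0 else (k:ℝ) * s^(k-1) * w0)
      (volume.restrict (Ioo (0:ℝ) 1)) := by
  have hind : (fun s : ℝ => if c ≤ s then 0 else (k:ℝ) * s^(k-1) * w0)
      = (Iio c).indicator (fun s => (k:ℝ) * s^(k-1) * w0) := by
    funext s
    rw [Set.indicator_apply]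
    by_cases h : c ≤ s
    · rw [if_pos h, if_neg (by simpa [Set.mem_Iio] using not_lt.2 h)]
    · rw [if_neg h, if_pos (by simpa [Set.mem_Iio] using not_le.1 h)]
  rw [hind]
  apply Integrable.indicator _ measurableSet_Iio
  have hcont : Continuous (fun s : ℝ => (k:ℝ) * s^(k-1) * w0) := by continuity
  have : IntegrableOn (fun s : ℝ => (k:ℝ) * s^(k-1) * w0) (Icc (0:ℝ) 1) volume :=
    hcont.continuousOn.integrableOn_compact isCompact_Icc
  exact this.mono_set Ioo_subset_Icc_self

include h0 h1 in
/-- moment identity for the discrete CDF -/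
lemma F_moment (n : ℕ) {k : ℕ} (hk : 1 ≤ k) :
    ∫ s in Ioo (0:ℝ) 1, ((k:ℝ) * s^(k-1) * (1 - F t n s))
      = ∑ j ∈ Finset.range (n+1), w t n j * ((j:ℝ)/n)^k := by
  have hfun : ∀ s : ℝ, (k:ℝ) * s^(k-1) * (1 - F t n s)
      = ∑ j ∈ Finset.range (n+1), (if ((j:ℝ)/n ≤ s) then 0 else (k:ℝ) * s^(k-1) * w t n j) := by
    intro s
    rw [one_sub_F h0 h1 n s, Finset.mul_sum]
    apply Finset.sum_congr rfl
    intro j _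
    by_cases h : (j:ℝ)/n ≤ s
    · rw [if_pos h, if_pos h, mul_zero]
    · rw [if_neg h, if_neg h]
  simp_rw [hfun]
  rw [integral_finset_sum _ (fun j _ => step_integrable _ _)]
  apply Finset.sum_congr rfl
  intro j hj
  exact step_integral hk (div_nonneg (Nat.cast_nonneg _) (Nat.cast_nonneg _))
    (div_mem_le_one hj) (w t n j)

/-- descFactorial ratio -/
noncomputable def r (n j k : ℕ) : ℝ := (j.descFactorial k : ℝ) / (n.descFactorial k : ℝ)

variable (h2 : ∀ k n, k ≤ n →
    ∑ m ∈ Finset.range (n - k + 1), ((n-k).choose m : ℝ) * t n (k+m) = t k k)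

include h2 in
lemma sum_w_r {k n : ℕ} (hkn : k ≤ n) :
    ∑ j ∈ Finset.range (n+1), w t n j * r n j k = t k k := by
  rw [sum_range_split (fun j => w t n j * r n j k) (show k ≤ n + 1 by omega)]
  have hz : ∑ j ∈ Finset.range k, w t n j * r n j k = 0 := by
    apply Finset.sum_eq_zero
    intro j hj
    simp only [Finset.mem_range] at hj
    have : j.descFactorial k = 0 := Nat.descFactorial_eq_zero_iff_lt.2 hj
    rw [r, this]
    simp
  rw [hz, zero_add, show n + 1 - k = n - k + 1 by omega, ← h2 k n hkn]
  apply Finset.sum_congr rfl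
  intro m hm
  simp only [Finset.mem_range] at hm
  have hkm : k + m ≤ n := by omega
  have hA : (n.choose (k+m) : ℝ) * ((k+m).descFactorial k : ℝ)
      = ((n-k).choose m : ℝ) * (n.descFactorial k : ℝ) := by
    exact_mod_cast congrArg (Nat.cast (R := ℝ)) (choose_descFactorial n k m hkm)
  have hd : (n.descFactorial k : ℝ) ≠ 0 := by
    have := descFactorial_pos (show k ≤ n by omega)
    positivity
  rw [w, r]
  field_simp
  linear_combination t n (k + m) * hA

/-- telescoping bound for products in [0,1] -/
lemma prod_sub_prod (k : ℕ) (u v : ℕ → ℝ) (hu : ∀ i, i < k → u i ∈ Icc (0:ℝ) 1)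
    (hv : ∀ i, i < k → v i ∈ Icc (0:ℝ) 1) :
    |∏ i ∈ Finset.range k, u i - ∏ i ∈ Finset.range k, v i|
      ≤ ∑ i ∈ Finset.range k, |u i - v i| := by
  induction k with
  | zero => simp
  | succ k ih =>
    have hu' : ∀ i, i < k → u i ∈ Icc (0:ℝ) 1 := fun i hi => hu i (by omega)
    have hv' : ∀ i, i < k → v i ∈ Icc (0:ℝ) 1 := fun i hi => hv i (by omega)
    rw [Finset.prod_range_succ, Finset.prod_range_succ, Finset.sum_range_succ]
    have huk := hu k (by omega)
    have hvk := hv k (by omega)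
    have hPu : |∏ i ∈ Finset.range k, u i| ≤ 1 := by
      rw [abs_of_nonneg (Finset.prod_nonneg (fun i hi => (hu' i (Finset.mem_range.1 hi)).1))]
      exact Finset.prod_le_one (fun i hi => (hu' i (Finset.mem_range.1 hi)).1)
        (fun i hi => (hu' i (Finset.mem_range.1 hi)).2)
    have hPv : |∏ i ∈ Finset.range k, v i| ≤ 1 := by
      rw [abs_of_nonneg (Finset.prod_nonneg (fun i hi => (hv' i (Finset.mem_range.1 hi)).1))]
      exact Finset.prod_le_one (fun i hi => (hv' i (Finset.mem_range.1 hi)).1)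
        (fun i hi => (hv' i (Finset.mem_range.1 hi)).2)
    calc |(∏ i ∈ Finset.range k, u i) * u k - (∏ i ∈ Finset.range k, v i) * v k|
        ≤ |(∏ i ∈ Finset.range k, u i) * u k - (∏ i ∈ Finset.range k, v i) * u k|
          + |(∏ i ∈ Finset.range k, v i) * u k - (∏ i ∈ Finset.range k, v i) * v k| := by
          apply abs_sub_le
      _ ≤ |∏ i ∈ Finset.range k, u i - ∏ i ∈ Finset.range k, v i| * |u k|
          + |∏ i ∈ Finset.range k, v i| * |u k - v k| := by
          rw [← sub_mul, ← mul_sub, abs_mul, abs_mul]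
      _ ≤ |∏ i ∈ Finset.range k, u i - ∏ i ∈ Finset.range k, v i| * 1
          + 1 * |u k - v k| := by
          gcongr
          · rw [abs_of_nonneg huk.1]; exact huk.2
      _ ≤ (∑ i ∈ Finset.range k, |u i - v i|) + |u k - v k| := by
          rw [mul_one, one_mul]
          gcongr
          exact ih hu' hv'

lemma r_eq_prod {n j k : ℕ} (hkj : k ≤ j) (hkn : k ≤ n) :
    r n j k = ∏ i ∈ Finset.range k, (((j:ℝ) - i)/((n:ℝ) - i)) := by
  rw [r, Finset.prod_div_distrib]
  congr 1
  · rw [Nat.descFactorial_eq_prod_range, Nat.cast_prod]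
    apply Finset.prod_congr rfl
    intro i hi
    simp only [Finset.mem_range] at hi
    rw [Nat.cast_sub (by omega)]
  · rw [Nat.descFactorial_eq_prod_range, Nat.cast_prod]
    apply Finset.prod_congr rfl
    intro i hi
    simp only [Finset.mem_range] at hi
    rw [Nat.cast_sub (by omega)]

/-- the main quantitative bound -/
lemma pow_sub_r_bound {k n j : ℕ} (hk : 1 ≤ k) (hkn : k < n) (hjn : j ≤ n) :
    |((j:ℝ)/n)^k - r n j k| ≤ (k:ℝ)^2 / ((n:ℝ) - k) := by
  have hn0 : (0:ℝ) < n := by exact_mod_cast (by omega : 0 < n)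
  have hnk : (0:ℝ) < (n:ℝ) - k := by
    have : (k:ℝ) < n := by exact_mod_cast hkn
    linarith
  rcases Nat.lt_or_ge j k with hjk | hjk
  · -- j < k : r = 0
    have hr : r n j k = 0 := by
      rw [r, Nat.descFactorial_eq_zero_iff_lt.2 hjk]
      simp
    rw [hr, sub_zero]
    have hj1 : (j:ℝ)/n ≤ 1 := by
      rw [div_le_one hn0]; exact_mod_cast hjn
    have hj0 : (0:ℝ) ≤ (j:ℝ)/n := div_nonneg (Nat.cast_nonneg _) (Nat.cast_nonneg _)
    rw [abs_of_nonneg (pow_nonneg hj0 k)]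
    calc ((j:ℝ)/n)^k ≤ ((j:ℝ)/n)^1 := pow_le_pow_of_le_one hj0 hj1 hk
      _ = (j:ℝ)/n := pow_one _
      _ ≤ (k:ℝ)/n := by
          have hjk' : (j:ℝ) ≤ (k:ℝ) := by exact_mod_cast le_of_lt hjk
          gcongr
      _ ≤ (k:ℝ)^2/((n:ℝ) - k) := by
          rw [div_le_div_iff₀ hn0 hnk]
          have hk1 : (1:ℝ) ≤ k := by exact_mod_cast hk
          nlinarith [mul_nonneg (le_trans zero_le_one hk1) hn0.le,
            mul_le_mul_of_nonneg_right hk1 (mul_nonneg (le_trans zero_le_one hk1) hn0.le)]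
  · -- k ≤ j
    rw [r_eq_prod hjk (by omega)]
    have hconst : ((j:ℝ)/n)^k = ∏ _i ∈ Finset.range k, ((j:ℝ)/n) := by
      rw [Finset.prod_const, Finset.card_range]
    rw [hconst]
    have hu : ∀ i, i < k → ((j:ℝ)/n) ∈ Icc (0:ℝ) 1 := by
      intro i _
      constructor
      · exact div_nonneg (Nat.cast_nonneg _) (Nat.cast_nonneg _)
      · rw [div_le_one hn0]; exact_mod_cast hjn
    have hv : ∀ i, i < k → (((j:ℝ) - i)/((n:ℝ) - i)) ∈ Icc (0:ℝ) 1 := by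
      intro i hi
      have hin : (i:ℝ) < n := by exact_mod_cast (by omega : i < n)
      have hij : (i:ℝ) ≤ j := by exact_mod_cast (by omega : i ≤ j)
      have hjn' : (j:ℝ) ≤ n := by exact_mod_cast hjn
      constructor
      · apply div_nonneg <;> linarith
      · rw [div_le_one (by linarith)]; linarith
    calc |∏ _i ∈ Finset.range k, ((j:ℝ)/n) - ∏ i ∈ Finset.range k, (((j:ℝ) - i)/((n:ℝ) - i))|
        ≤ ∑ i ∈ Finset.range k, |((j:ℝ)/n) - (((j:ℝ) - i)/((n:ℝ) - i))| :=
          prod_sub_prod k _ _ hu hv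
      _ ≤ ∑ _i ∈ Finset.range k, (k:ℝ)/((n:ℝ) - k) := by
          apply Finset.sum_le_sum
          intro i hi
          simp only [Finset.mem_range] at hi
          have hin : (0:ℝ) < (n:ℝ) - i := by
            have : (i:ℝ) < n := by exact_mod_cast (by omega : i < n)
            linarith
          rw [div_sub_div _ _ (ne_of_gt hn0) (ne_of_gt hin)]
          have hnum : (j:ℝ) * ((n:ℝ) - i) - (n:ℝ) * ((j:ℝ) - i) = (i:ℝ) * ((n:ℝ) - j) := by
            ring
          rw [hnum, abs_div]
          have hjn' : (j:ℝ) ≤ n := by exact_mod_cast hjn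
          have hi0 : (0:ℝ) ≤ i := Nat.cast_nonneg _
          rw [abs_of_nonneg (by nlinarith : (0:ℝ) ≤ (i:ℝ) * ((n:ℝ) - j)),
            abs_of_pos (by nlinarith : (0:ℝ) < (n:ℝ) * ((n:ℝ) - i))]
          rw [div_le_div_iff₀ (by nlinarith) hnk]
          have hik : (i:ℝ) ≤ k := by exact_mod_cast (by omega : i ≤ k)
          have hkn' : (n:ℝ) - k ≤ (n:ℝ) - i := by
            have : (i:ℝ) ≤ k := hik
            linarith
          have hk0 : (0:ℝ) ≤ k := Nat.cast_nonneg _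
          have hb1 : (i:ℝ) * ((n:ℝ) - j) * ((n:ℝ)-k) ≤ (k:ℝ) * ((n:ℝ) - j) * ((n:ℝ)-k) :=
            mul_le_mul_of_nonneg_right (mul_le_mul_of_nonneg_right hik (by linarith)) hnk.le
          have hb2 : (k:ℝ) * ((n:ℝ) - j) * ((n:ℝ)-k) ≤ (k:ℝ) * (n:ℝ) * ((n:ℝ)-k) :=
            mul_le_mul_of_nonneg_right (mul_le_mul_of_nonneg_left (by linarith) hk0) hnk.le
          have hb3 : (k:ℝ) * (n:ℝ) * ((n:ℝ)-k) ≤ (k:ℝ) * (n:ℝ) * ((n:ℝ)-i) :=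
            mul_le_mul_of_nonneg_left hkn' (by nlinarith)
          nlinarith [hb1, hb2, hb3]
      _ = (k:ℝ)^2/((n:ℝ) - k) := by
          rw [Finset.sum_const, Finset.card_range, nsmul_eq_mul]
          field_simp

include h0 h1 h2 in
/-- convergence of the discrete moments -/
lemma M_tendsto {k : ℕ} (hk : 1 ≤ k) :
    Tendsto (fun n => ∑ j ∈ Finset.range (n+1), w t n j * ((j:ℝ)/n)^k) atTop
      (𝓝 (t k k)) := by
  set M : ℕ → ℝ := fun n => ∑ j ∈ Finset.range (n+1), w t n j * ((j:ℝ)/n)^k with hM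
  have hbound : ∀ n, k < n → ‖M n - t k k‖ ≤ (k:ℝ)^2/((n:ℝ) - k) := by
    intro n hn
    rw [hM]
    simp only
    rw [← sum_w_r h2 (show k ≤ n by omega), ← Finset.sum_sub_distrib]
    rw [Real.norm_eq_abs]
    calc |∑ j ∈ Finset.range (n+1), (w t n j * ((j:ℝ)/n)^k - w t n j * r n j k)|
        ≤ ∑ j ∈ Finset.range (n+1), |w t n j * ((j:ℝ)/n)^k - w t n j * r n j k| :=
          Finset.abs_sum_le_sum_abs _ _
      _ ≤ ∑ j ∈ Finset.range (n+1), w t n j * ((k:ℝ)^2/((n:ℝ) - k)) := by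
          apply Finset.sum_le_sum
          intro j hj
          simp only [Finset.mem_range] at hj
          rw [← mul_sub, abs_mul, abs_of_nonneg (w_nonneg h0 n j)]
          apply mul_le_mul_of_nonneg_left _ (w_nonneg h0 n j)
          exact pow_sub_r_bound hk hn (by omega)
      _ = (k:ℝ)^2/((n:ℝ) - k) := by
          rw [← Finset.sum_mul]
          have : ∑ j ∈ Finset.range (n+1), w t n j = 1 := h1 n
          rw [this, one_mul]
  have htend0 : Tendsto (fun n : ℕ => (k:ℝ)^2/((n:ℝ) - k)) atTop (𝓝 0) := by
    apply Tendsto.div_atTop tendsto_const_nhds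
    apply tendsto_atTop_add_const_right
    exact tendsto_natCast_atTop_atTop
  have hsq : Tendsto (fun n => M n - t k k) atTop (𝓝 0) := by
    apply squeeze_zero_norm' _ htend0
    filter_upwards [eventually_gt_atTop k] with n hn
    exact hbound n hn
  have := hsq.add_const (t k k)
  simpa using this

end Analysis


/-- ∫_{(0,c)} k s^(k-1) ds = c^k -/
lemma intpow {k : ℕ} (hk : 1 ≤ k) {c : ℝ} (hc : 0 ≤ c) :
    ∫ s in Ioo (0:ℝ) c, (k:ℝ) * s^(k-1) = c^k := by
  rw [← integral_Ioc_eq_integral_Ioo, ← intervalIntegral.integral_of_le hc]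
  rw [intervalIntegral.integral_const_mul, integral_pow]
  have hkk : k - 1 + 1 = k := Nat.sub_add_cancel hk
  rw [hkk]
  have hc' : ((k - 1 : ℕ) : ℝ) + 1 = (k : ℝ) := by
    rw [Nat.cast_sub hk]; push_cast; ring
  rw [hc', zero_pow (by omega : k ≠ 0)]
  have hkne : (k:ℝ) ≠ 0 := by positivity
  field_simp
  simp

set_option maxHeartbeats 1000000 in
/-- The selection/limit theorem for CDFs. -/
theorem exists_cdf_limit (F : ℕ → ℝ → ℝ) (hmono : ∀ n, Monotone (F n))
    (h01 : ∀ n x, F n x ∈ Icc (0:ℝ) 1)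
    (hneg : ∀ n x, x < 0 → F n x = 0)
    (hone : ∀ n x, 1 ≤ x → F n x = 1) :
    ∃ ν : Measure ℝ, IsProbabilityMeasure ν ∧ ν (Icc 0 1) = 1 ∧
      ∃ φ : ℕ → ℕ, StrictMono φ ∧
        ∀ k : ℕ, 1 ≤ k →
          Tendsto (fun m => ∫ s in Ioo (0:ℝ) 1, ((k:ℝ) * s^(k-1) * (1 - F (φ m) s)))
            atTop (𝓝 (∫ p, p^k ∂ν)) := by
  classical
  -- Step 1: subsequence with pointwise rational convergence
  let Φ : ℕ → (ℚ → Icc (0:ℝ) 1) := fun n q => ⟨F n q, h01 n q⟩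
  obtain ⟨G, φ, hφ, hGconv⟩ := SeqCompactSpace.tendsto_subseq Φ
  have hG : ∀ q : ℚ, Tendsto (fun m => F (φ m) q) atTop (𝓝 ((G q : ℝ))) := by
    intro q
    have h1 := (tendsto_pi_nhds.1 hGconv) q
    exact (continuous_subtype_val.tendsto _).comp h1
  have hg0 : ∀ q : ℚ, 0 ≤ (G q : ℝ) := fun q => (G q).2.1
  have hg1 : ∀ q : ℚ, (G q : ℝ) ≤ 1 := fun q => (G q).2.2
  have hgneg : ∀ q : ℚ, (q:ℝ) < 0 → (G q : ℝ) = 0 := by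
    intro q hq
    have hc : (fun m => F (φ m) (q:ℝ)) = fun _ => (0:ℝ) :=
      funext fun m => hneg _ _ hq
    exact (tendsto_nhds_unique (hG q) (hc ▸ tendsto_const_nhds))
  have hgone : ∀ q : ℚ, (1:ℝ) ≤ (q:ℝ) → (G q : ℝ) = 1 := by
    intro q hq
    have hc : (fun m => F (φ m) (q:ℝ)) = fun _ => (1:ℝ) :=
      funext fun m => hone _ _ hq
    exact (tendsto_nhds_unique (hG q) (hc ▸ tendsto_const_nhds))
  -- Step 2: the limit CDF
  set Fi : ℝ → ℝ := fun x => sInf ((fun q : ℚ => (G q : ℝ)) '' {q : ℚ | x < (q:ℝ)}) with hFi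
  have hne : ∀ x : ℝ, ((fun q : ℚ => (G q : ℝ)) '' {q : ℚ | x < (q:ℝ)}).Nonempty := by
    intro x
    obtain ⟨q, hq⟩ := exists_rat_gt x
    exact ⟨_, ⟨q, hq, rfl⟩⟩
  have hbdd : ∀ x : ℝ, BddBelow ((fun q : ℚ => (G q : ℝ)) '' {q : ℚ | x < (q:ℝ)}) := by
    intro x
    refine ⟨0, ?_⟩
    rintro y ⟨q, _, rfl⟩
    exact hg0 q
  have hFi_le : ∀ (x : ℝ) (q : ℚ), x < (q:ℝ) → Fi x ≤ (G q : ℝ) :=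
    fun x q hq => csInf_le (hbdd x) ⟨q, hq, rfl⟩
  have hle_Fi : ∀ (x : ℝ) (b : ℝ), (∀ q : ℚ, x < (q:ℝ) → b ≤ (G q : ℝ)) → b ≤ Fi x := by
    intro x b hb
    apply le_csInf (hne x)
    rintro y ⟨q, hq, rfl⟩
    exact hb q hq
  have hFi0 : ∀ x, 0 ≤ Fi x := fun x => hle_Fi x 0 (fun q _ => hg0 q)
  have hFi1 : ∀ x, Fi x ≤ 1 := by
    intro x
    obtain ⟨q, hq⟩ := exists_rat_gt x
    exact le_trans (hFi_le x q hq) (hg1 q)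
  have hFimono : Monotone Fi := by
    intro x y hxy
    exact hle_Fi y (Fi x) (fun q hq => hFi_le x q (lt_of_le_of_lt hxy hq))
  have hFineg : ∀ x : ℝ, x < 0 → Fi x = 0 := by
    intro x hx
    obtain ⟨q, hq1, hq2⟩ := exists_rat_btwn hx
    exact le_antisymm (le_trans (hFi_le x q hq1) (le_of_eq (hgneg q hq2))) (hFi0 x)
  have hFione : ∀ x : ℝ, 1 ≤ x → Fi x = 1 := by
    intro x hx
    refine le_antisymm (hFi1 x) (hle_Fi x 1 ?_)
    intro q hq
    exact le_of_eq (hgone q (by linarith)).symm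
  have hright : ∀ x, ContinuousWithinAt Fi (Ici x) x := by
    intro x
    rw [Metric.continuousWithinAt_iff]
    intro ε hε
    obtain ⟨y, ⟨q, hq, rfl⟩, hy⟩ := exists_lt_of_csInf_lt (hne x)
      (show sInf _ < Fi x + ε by linarith)
    simp only [mem_setOf_eq] at hq
    refine ⟨(q:ℝ) - x, by linarith, ?_⟩
    intro y hy' hdy
    rw [Real.dist_eq] at hdy ⊢
    have hyx : x ≤ y := hy'
    have hyq : y < (q:ℝ) := by
      rw [abs_lt] at hdy
      linarith [hdy.2]
    have hb1 : Fi x ≤ Fi y := hFimono hyx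
    have hb2 : Fi y ≤ (G q : ℝ) := hFi_le y q hyq
    rw [abs_lt]
    constructor <;> linarith
  set Fst : StieltjesFunction ℝ := ⟨Fi, hFimono, hright⟩ with hFst
  have hFst_apply : ∀ x, Fst x = Fi x := fun _ => rfl
  set ν : Measure ℝ := Fst.measure with hν
  have hbot : Tendsto Fst atBot (𝓝 0) := by
    apply Tendsto.congr' _ (tendsto_const_nhds (α := ℝ) (f := atBot))
    filter_upwards [eventually_lt_atBot (0:ℝ)] with x hx
    exact (hFineg x hx).symm
  have htop : Tendsto Fst atTop (𝓝 1) := by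
    apply Tendsto.congr' _ (tendsto_const_nhds (α := ℝ) (f := atTop))
    filter_upwards [eventually_ge_atTop (1:ℝ)] with x hx
    exact (hFione x hx).symm
  have hIic : ∀ x, ν (Iic x) = ENNReal.ofReal (Fi x) := by
    intro x
    have := Fst.measure_Iic hbot x
    simpa using this
  have hν_univ : ν univ = 1 := by
    rw [Fst.measure_univ hbot htop]
    simp
  have hprob : IsProbabilityMeasure ν := ⟨hν_univ⟩
  have hIio0 : ν (Iio 0) = 0 := by
    have hsub : Iio (0:ℝ) ⊆ ⋃ q : {q : ℚ // (q:ℝ) < 0}, Iic ((q:ℚ):ℝ) := by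
      intro x hx
      simp only [mem_Iio] at hx
      obtain ⟨q, hq1, hq2⟩ := exists_rat_btwn hx
      exact mem_iUnion.2 ⟨⟨q, hq2⟩, le_of_lt hq1⟩
    apply measure_mono_null hsub
    apply measure_iUnion_null
    intro q
    rw [hIic, hFineg _ q.2]
    simp
  have hIcc : ν (Icc 0 1) = 1 := by
    have hset : Icc (0:ℝ) 1 = Iic 1 \ Iio 0 := by
      ext x
      simp only [mem_Icc, mem_diff, mem_Iic, mem_Iio, not_lt]
      tauto
    rw [hset, measure_diff_null hIio0, hIic, hFione 1 le_rfl]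
    simp
  have hmemae : ∀ᵐ p ∂ν, p ∈ Icc (0:ℝ) 1 := by
    rw [ae_iff]
    have : {p : ℝ | ¬ p ∈ Icc (0:ℝ) 1} = (Icc (0:ℝ) 1)ᶜ := rfl
    rw [this, measure_compl measurableSet_Icc (measure_ne_top ν _), hν_univ, hIcc]
    simp
  have hIoi : ∀ s : ℝ, ν (Ioi s) = ENNReal.ofReal (1 - Fi s) := by
    intro s
    have h1 : Ioi s = (Iic s)ᶜ := compl_Iic.symm
    rw [h1, measure_compl measurableSet_Iic (measure_ne_top ν _), hν_univ, hIic]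
    have h2 : (1 : ENNReal) = ENNReal.ofReal (Fi s) + ENNReal.ofReal (1 - Fi s) := by
      rw [← ENNReal.ofReal_add (hFi0 s) (by linarith [hFi1 s])]
      norm_num
    rw [h2, ENNReal.add_sub_cancel_left ENNReal.ofReal_ne_top]
  -- Step 3: convergence at continuity points
  have hconvF : ∀ x : ℝ, ContinuousAt Fi x →
      Tendsto (fun m => F (φ m) x) atTop (𝓝 (Fi x)) := by
    intro x hx
    rw [Metric.tendsto_atTop]
    intro ε hε
    obtain ⟨y, ⟨q, hq, rfl⟩, hyq⟩ := exists_lt_of_csInf_lt (hne x)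
      (show sInf _ < Fi x + ε/2 by linarith)
    have hev1 : ∀ᶠ m in atTop, F (φ m) x < Fi x + ε/2 := by
      have := (hG q).eventually (eventually_lt_nhds hyq)
      filter_upwards [this] with m hm
      exact lt_of_le_of_lt (hmono (φ m) (le_of_lt hq)) hm
    obtain ⟨δ, hδ, hδc⟩ := Metric.continuousAt_iff.1 hx (ε/2) (by linarith)
    have hyltx : x - δ/2 < x := by linarith
    obtain ⟨q', hq'1, hq'2⟩ := exists_rat_btwn hyltx
    have hFiy : Fi x - ε/2 < Fi (x - δ/2) := by
      have := hδc (show dist (x - δ/2) x < δ by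
        rw [Real.dist_eq]; rw [abs_lt]; constructor <;> linarith)
      rw [Real.dist_eq, abs_lt] at this
      linarith [this.2]
    have hGq' : Fi x - ε/2 < (G q' : ℝ) :=
      lt_of_lt_of_le hFiy (hFi_le _ q' hq'1)
    have hev2 : ∀ᶠ m in atTop, Fi x - ε/2 < F (φ m) x := by
      have := (hG q').eventually (eventually_gt_nhds hGq')
      filter_upwards [this] with m hm
      exact lt_of_lt_of_le hm (hmono (φ m) (le_of_lt hq'2))
    have hev := hev1.and hev2
    rw [eventually_atTop] at hev
    obtain ⟨N, hN⟩ := hev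
    refine ⟨N, fun m hm => ?_⟩
    obtain ⟨hm1, hm2⟩ := hN m hm
    rw [Real.dist_eq, abs_lt]
    constructor <;> linarith
  -- Step 4: the moment formula for ν
  have hFimeas : Measurable Fi := hFimono.measurable
  have hmomL : ∀ k : ℕ, 1 ≤ k →
      ∫ p, p^k ∂ν = ∫ s in Ioo (0:ℝ) 1, ((k:ℝ) * s^(k-1) * (1 - Fi s)) := by
    intro k hk
    set H : ℝ → ℝ → ENNReal := fun p s => if s < p then ENNReal.ofReal ((k:ℝ) * s^(k-1)) else 0
      with hH
    have hpow : ∀ p ∈ Icc (0:ℝ) 1,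
        (∫⁻ s in Ioo (0:ℝ) 1, H p s) = ENNReal.ofReal (p^k) := by
      intro p hp
      have hind : (fun s => H p s)
          = (Iio p).indicator (fun s => ENNReal.ofReal ((k:ℝ) * s^(k-1))) := by
        funext s
        simp only [Set.indicator_apply, hH]
        by_cases h : s < p
        · rw [if_pos h, if_pos (mem_Iio.2 h)]
        · rw [if_neg h, if_neg (by simpa [mem_Iio] using h)]
      rw [hind, lintegral_indicator measurableSet_Iio,
        Measure.restrict_restrict measurableSet_Iio]
      have hset : Iio p ∩ Ioo (0:ℝ) 1 = Ioo 0 p := by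
        ext s
        simp only [mem_inter_iff, mem_Iio, mem_Ioo]
        constructor
        · rintro ⟨hs1, hs2, hs3⟩; exact ⟨hs2, hs1⟩
        · rintro ⟨hs1, hs2⟩; exact ⟨hs2, hs1, lt_of_lt_of_le hs2 hp.2⟩
      rw [hset]
      have hint : IntegrableOn (fun s : ℝ => (k:ℝ) * s^(k-1)) (Ioo 0 p) volume := by
        have hcont : Continuous (fun s : ℝ => (k:ℝ) * s^(k-1)) :=
          continuous_const.mul (continuous_pow (k-1))
        exact (hcont.continuousOn.integrableOn_compact isCompact_Icc).mono_set
          (by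
            intro s hs
            simp only [mem_Ioo] at hs
            exact ⟨le_of_lt hs.1, le_trans (le_of_lt hs.2) hp.2⟩)
      rw [← ofReal_integral_eq_lintegral_ofReal hint
        ((ae_restrict_iff' measurableSet_Ioo).2 (ae_of_all _ (fun s hs =>
          mul_nonneg (Nat.cast_nonneg _) (pow_nonneg (le_of_lt hs.1) _))))]
      rw [intpow hk hp.1]
    have step2 : ∫ p, p^k ∂ν = (∫⁻ p, ENNReal.ofReal (p^k) ∂ν).toReal := by
      apply integral_eq_lintegral_of_nonneg_ae
      · filter_upwards [hmemae] with p hp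
        exact pow_nonneg hp.1 k
      · exact (continuous_pow k).aestronglyMeasurable
    have step3 : ∫⁻ p, ENNReal.ofReal (p^k) ∂ν = ∫⁻ p, (∫⁻ s in Ioo (0:ℝ) 1, H p s) ∂ν := by
      apply lintegral_congr_ae
      filter_upwards [hmemae] with p hp
      exact (hpow p hp).symm
    have hHmeas : Measurable (Function.uncurry H) := by
      have hset : MeasurableSet {x : ℝ × ℝ | x.2 < x.1} :=
        measurableSet_lt measurable_snd measurable_fst
      apply Measurable.ite hset
      · exact (measurable_const.mul ((measurable_snd.pow_const (k-1)))).ennreal_ofReal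
      · exact measurable_const
    have step4 : ∫⁻ p, (∫⁻ s in Ioo (0:ℝ) 1, H p s) ∂ν
        = ∫⁻ s in Ioo (0:ℝ) 1, (∫⁻ p, H p s ∂ν) := by
      apply lintegral_lintegral_swap
      exact hHmeas.aemeasurable
    have step5 : ∀ s : ℝ, (∫⁻ p, H p s ∂ν) = ENNReal.ofReal ((k:ℝ) * s^(k-1)) * ν (Ioi s) := by
      intro s
      have hind : (fun p => H p s)
          = (Ioi s).indicator (fun _ => ENNReal.ofReal ((k:ℝ) * s^(k-1))) := by
        funext p
        simp only [Set.indicator_apply, hH]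
        by_cases h : s < p
        · rw [if_pos h, if_pos (mem_Ioi.2 h)]
        · rw [if_neg h, if_neg (by simpa [mem_Ioi] using h)]
      rw [hind, lintegral_indicator measurableSet_Ioi, setLIntegral_const]
    have step6 : ∫⁻ s in Ioo (0:ℝ) 1, (∫⁻ p, H p s ∂ν)
        = ∫⁻ s in Ioo (0:ℝ) 1, ENNReal.ofReal ((k:ℝ) * s^(k-1) * (1 - Fi s)) := by
      apply setLIntegral_congr_fun measurableSet_Ioo
      intro s hs
      beta_reduce
      rw [step5, hIoi, ← ENNReal.ofReal_mul
        (mul_nonneg (Nat.cast_nonneg _) (pow_nonneg (le_of_lt hs.1) _))]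
    have step7 : ∫ s in Ioo (0:ℝ) 1, ((k:ℝ) * s^(k-1) * (1 - Fi s))
        = (∫⁻ s in Ioo (0:ℝ) 1, ENNReal.ofReal ((k:ℝ) * s^(k-1) * (1 - Fi s))).toReal := by
      apply integral_eq_lintegral_of_nonneg_ae
      · apply (ae_restrict_iff' measurableSet_Ioo).2
        apply ae_of_all
        intro s hs
        have := hFi1 s
        have := hFi0 s
        have h1 : (0:ℝ) ≤ (k:ℝ) * s^(k-1) :=
          mul_nonneg (Nat.cast_nonneg _) (pow_nonneg (le_of_lt hs.1) _)
        exact mul_nonneg h1 (by linarith)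
      · apply Measurable.aestronglyMeasurable
        exact (measurable_const.mul (measurable_id.pow_const (k-1))).mul
          (measurable_const.sub hFimeas)
    rw [step2, step3, step4, step6, step7]
  -- Step 5: dominated convergence
  refine ⟨ν, hprob, hIcc, φ, hφ, ?_⟩
  intro k hk
  rw [hmomL k hk]
  have hDnull : ∀ᵐ s ∂(volume.restrict (Ioo (0:ℝ) 1)), ContinuousAt Fi s := by
    apply ae_restrict_of_ae
    have hcnt := hFimono.countable_not_continuousAt
    rw [ae_iff]
    apply measure_mono_null _ (hcnt.measure_zero volume)
    intro x hx
    simpa using hx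
  apply tendsto_integral_of_dominated_convergence (bound := fun _ => (k:ℝ))
  · intro m
    apply Measurable.aestronglyMeasurable
    apply (measurable_const.mul (measurable_id.pow_const (k-1))).mul
    apply measurable_const.sub
    exact (hmono (φ m)).measurable
  · exact integrable_const _
  · intro m
    apply (ae_restrict_iff' measurableSet_Ioo).2
    apply ae_of_all
    intro s hs
    have h1 := (h01 (φ m) s).1
    have h2 := (h01 (φ m) s).2
    have hs0 : (0:ℝ) < s := hs.1
    have hs1 : s < 1 := hs.2
    have hp1 : s^(k-1) ≤ 1 := pow_le_one₀ (le_of_lt hs0) (le_of_lt hs1)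
    have hp0 : (0:ℝ) ≤ s^(k-1) := pow_nonneg (le_of_lt hs0) _
    rw [Real.norm_eq_abs, abs_mul, abs_mul]
    have hk0 : (0:ℝ) ≤ (k:ℝ) := Nat.cast_nonneg _
    rw [abs_of_nonneg hk0, abs_of_nonneg hp0]
    have habs : |1 - F (φ m) s| ≤ 1 := by
      rw [abs_le]; constructor <;> linarith
    calc (k:ℝ) * s^(k-1) * |1 - F (φ m) s| ≤ (k:ℝ) * 1 * 1 := by
          apply mul_le_mul _ habs (abs_nonneg _) (by positivity)
          apply mul_le_mul_of_nonneg_left hp1 hk0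
      _ = (k:ℝ) := by ring
  · filter_upwards [hDnull] with s hs
    have ht : Tendsto (fun m => 1 - F (φ m) s) atTop (𝓝 (1 - Fi s)) :=
      tendsto_const_nhds.sub (hconvF s hs)
    exact ht.const_mul _


section Glue

/-- Hausdorff-type moment existence from the combinatorial data -/
theorem exists_moment_measure (t : ℕ → ℕ → ℝ)
    (h0 : ∀ n j, 0 ≤ t n j)
    (h1 : ∀ n, ∑ j ∈ Finset.range (n+1), (n.choose j : ℝ) * t n j = 1)
    (h2 : ∀ k n, k ≤ n →
      ∑ m ∈ Finset.range (n - k + 1), ((n-k).choose m : ℝ) * t n (k+m) = t k k) :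
    ∃ ν : Measure ℝ, IsProbabilityMeasure ν ∧ ν (Icc 0 1) = 1 ∧
      ∀ k : ℕ, ∫ p, p ^ k ∂ν = t k k := by
  obtain ⟨ν, hprob, hIcc, φ, hφ, hconv⟩ := exists_cdf_limit (F t)
    (fun n => F_mono h0 n)
    (fun n x => ⟨F_nonneg h0 n x, F_le_one h0 h1 n x⟩)
    (fun n x hx => F_zero n hx)
    (fun n x hx => F_one h0 h1 n hx)
  refine ⟨ν, hprob, hIcc, ?_⟩
  intro k
  rcases Nat.eq_zero_or_pos k with hk | hk
  · subst hk
    have ht00 : t 0 0 = 1 := by simpa using h1 0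
    haveI := hprob
    simp only [pow_zero, integral_const, measure_univ, ENNReal.toReal_one, smul_eq_mul,
      one_mul, ht00]
    simp
  · have hc1 : Tendsto (fun m => ∑ j ∈ Finset.range (φ m + 1), w t (φ m) j * ((j:ℝ)/(φ m))^k)
        atTop (𝓝 (t k k)) :=
      (M_tendsto h0 h1 h2 hk).comp hφ.tendsto_atTop
    have hc2 : Tendsto (fun m => ∑ j ∈ Finset.range (φ m + 1), w t (φ m) j * ((j:ℝ)/(φ m))^k)
        atTop (𝓝 (∫ p, p ^ k ∂ν)) := by
      apply (hconv k hk).congr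
      intro m
      exact F_moment h0 h1 (φ m) hk
    exact tendsto_nhds_unique hc2 hc1

variable {Ω : Type*} [MeasurableSpace Ω] {μ : Measure Ω} [IsProbabilityMeasure μ]
  {X : ℕ → Ω → Bool}

lemma t_eq_integral (hX : ∀ i, Measurable (X i)) (h : Exch μ X)
    (ν : Measure ℝ) (hprob : IsProbabilityMeasure ν) (hIcc : ν (Icc 0 1) = 1)
    (hmom : ∀ k, ∫ p, p ^ k ∂ν = t μ X k k) :
    ∀ d k, t μ X (k + d) k = ∫ p, p ^ k * (1 - p) ^ d ∂ν := by
  haveI := hprob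
  have hres : ν.restrict (Icc 0 1) = ν := by
    apply Measure.restrict_eq_self_of_ae_mem
    rw [ae_iff]
    have hs : {p : ℝ | ¬ p ∈ Icc (0:ℝ) 1} = (Icc (0:ℝ) 1)ᶜ := rfl
    rw [hs, measure_compl measurableSet_Icc (measure_ne_top ν _), hIcc, measure_univ]
    simp
  have hint : ∀ (f : ℝ → ℝ), Continuous f → Integrable f ν := by
    intro f hf
    rw [← hres]
    exact hf.continuousOn.integrableOn_compact isCompact_Icc
  intro d
  induction d with
  | zero =>
    intro k
    have := (hmom k).symm
    simpa [pow_zero, mul_one] using this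
  | succ d ih =>
    intro k
    have hrec := t_rec hX h (show k ≤ k + d by omega)
    have e1 := ih k
    have e2 : t μ X (k + d + 1) (k + 1) = ∫ p, p ^ (k+1) * (1 - p) ^ d ∂ν := by
      have := ih (k + 1)
      rw [show k + 1 + d = k + d + 1 by omega] at this
      exact this
    have hsub : ∫ p, p ^ k * (1 - p) ^ (d + 1) ∂ν
        = (∫ p, p ^ k * (1 - p) ^ d ∂ν) - ∫ p, p ^ (k+1) * (1 - p) ^ d ∂ν := by
      rw [← integral_sub
        (hint (fun p : ℝ => p ^ k * (1 - p) ^ d)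
          ((continuous_pow k).mul ((continuous_const.sub continuous_id).pow d)))
        (hint (fun p : ℝ => p ^ (k+1) * (1 - p) ^ d)
          ((continuous_pow (k+1)).mul ((continuous_const.sub continuous_id).pow d)))]
      apply integral_congr_ae
      apply ae_of_all
      intro p
      simp only
      ring
    have hgoal : t μ X (k + (d + 1)) k = t μ X (k + d) k - t μ X (k + d + 1) (k + 1) := by
      have hh : k + (d + 1) = k + d + 1 := by omega
      rw [hh]
      linarith [hrec]
    rw [hgoal, e1, e2, hsub]

lemma prod_ite_pow {n : ℕ} (a : Fin n → Bool) (p : ℝ) :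
    ∏ i : Fin n, (if a i then p else 1 - p) = p ^ (cnt a) * (1 - p) ^ (n - cnt a) := by
  classical
  rw [Finset.prod_ite]
  rw [Finset.prod_const, Finset.prod_const]
  have hc1 : (Finset.filter (fun i => a i = true) Finset.univ).card = cnt a := rfl
  have hc2 : (Finset.filter (fun i => ¬ a i = true) Finset.univ).card = n - cnt a := by
    have hh := Finset.card_filter_add_card_filter_not
      (s := (Finset.univ : Finset (Fin n))) (p := fun i => a i = true)
    simp only [Finset.card_univ, Fintype.card_fin] at hh
    have hcnt : cnt a = (Finset.univ.filter (fun i => a i = true)).card := rfl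
    omega
  rw [hc1, hc2]

/-- forward direction -/
theorem forward (hX : ∀ i, Measurable (X i)) (h : Exch μ X) :
    ∃ ν : Measure ℝ, IsProbabilityMeasure ν ∧ ν (Set.Icc (0:ℝ) 1) = 1 ∧
      ∀ (n : ℕ) (a : Fin n → Bool),
        μ {ω | ∀ i : Fin n, X i.val ω = a i}
          = ENNReal.ofReal (∫ p, (∏ i : Fin n, if a i then p else 1 - p) ∂ν) := by
  obtain ⟨ν, hprob, hIcc, hmom⟩ := exists_moment_measure (t μ X)
    (fun n j => t_nonneg n j) (sum_w_one hX h) (fun k n hkn => prefix_sum hX h hkn)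
  refine ⟨ν, hprob, hIcc, ?_⟩
  intro n a
  have hset : {ω | ∀ i : Fin n, X i.val ω = a i} = S X a := rfl
  have hd : t μ X n (cnt a) = ∫ p, p ^ (cnt a) * (1 - p) ^ (n - cnt a) ∂ν := by
    have := t_eq_integral hX h ν hprob hIcc hmom (n - cnt a) (cnt a)
    rw [show cnt a + (n - cnt a) = n from by have := cnt_le a; omega] at this
    exact this
  have hfin : μ (S X a) ≠ ⊤ := measure_ne_top μ _
  rw [hset, ← ENNReal.ofReal_toReal hfin, S_eq_t hX h a, hd]
  congr 1
  apply integral_congr_ae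
  apply ae_of_all
  intro p
  exact (prod_ite_pow a p).symm

/-- backward direction -/
theorem backward (hX : ∀ i, Measurable (X i))
    (ν : Measure ℝ)
    (hmom : ∀ (n : ℕ) (a : Fin n → Bool),
        μ {ω | ∀ i : Fin n, X i.val ω = a i}
          = ENNReal.ofReal (∫ p, (∏ i : Fin n, if a i then p else 1 - p) ∂ν)) :
    Exch μ X := by
  intro n π
  have hm1 : Measurable (fun ω => fun i : Fin n => X (π i : Fin n).val ω) :=
    measurable_pi_lambda _ (fun i => hX _)
  have hm2 : Measurable (fun ω => fun i : Fin n => X i.val ω) :=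
    measurable_pi_lambda _ (fun i => hX _)
  apply Measure.ext
  intro s hs
  rw [Measure.map_apply hm1 hs, Measure.map_apply hm2 hs]
  have hkey : ∀ a : Fin n → Bool,
      μ {ω | ∀ i : Fin n, X (π i : Fin n).val ω = a i}
        = μ {ω | ∀ i : Fin n, X i.val ω = a i} := by
    intro a
    have hset : {ω | ∀ i : Fin n, X (π i : Fin n).val ω = a i}
        = {ω | ∀ i : Fin n, X i.val ω = (a ∘ π.symm) i} := by
      ext ω
      simp only [mem_setOf_eq, Function.comp_apply]
      constructor
      · intro hω i
        have := hω (π.symm i)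
        simpa using this
      · intro hω i
        have := hω (π i)
        simpa using this
    rw [hset, hmom n (a ∘ π.symm), hmom n a]
    congr 1
    apply integral_congr_ae
    apply ae_of_all
    intro p
    simp only
    exact Equiv.prod_comp π.symm (fun i => if a i then p else 1 - p) |>.symm ▸ rfl
  have hdec : ∀ (g : Ω → (Fin n → Bool)), Measurable g →
      μ (g ⁻¹' s) = ∑' a : s, μ (g ⁻¹' {(a : Fin n → Bool)}) := by
    intro g hg
    have hun : g ⁻¹' s = ⋃ a : s, g ⁻¹' {(a : Fin n → Bool)} := by
      ext ω
      simp only [mem_preimage, mem_iUnion, mem_singleton_iff]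
      constructor
      · intro hω
        exact ⟨⟨g ω, hω⟩, rfl⟩
      · rintro ⟨a, ha⟩
        rw [ha]
        exact a.2
    rw [hun]
    apply measure_iUnion
    · intro a b hab
      rw [Function.onFun, Set.disjoint_left]
      intro ω h1 h2
      apply hab
      apply Subtype.ext
      rw [← h1, ← h2]
    · intro a
      exact hg (measurableSet_singleton _)
  rw [hdec _ hm1, hdec _ hm2]
  congr 1
  funext a
  have hp1 : (fun ω => fun i : Fin n => X (π i : Fin n).val ω) ⁻¹' {(a : Fin n → Bool)}
      = {ω | ∀ i : Fin n, X (π i : Fin n).val ω = (a : Fin n → Bool) i} := by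
    ext ω
    simp [funext_iff]
  have hp2 : (fun ω => fun i : Fin n => X i.val ω) ⁻¹' {(a : Fin n → Bool)}
      = {ω | ∀ i : Fin n, X i.val ω = (a : Fin n → Bool) i} := by
    ext ω
    simp [funext_iff]
  rw [hp1, hp2, hkey]

end Glue

end DeFinettiAux

open MeasureTheory

/-- de Finetti: a sequence of `{0,1}`-valued random variables is
exchangeable iff it is a mixture of i.i.d. Bernoulli sequences. -/
theorem deFinetti
    {Ω : Type*} [MeasurableSpace Ω] (μ : Measure Ω) [IsProbabilityMeasure μ]
    (X : ℕ → Ω → Bool) (hX : ∀ i, Measurable (X i)) :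
    (∀ (n : ℕ) (π : Equiv.Perm (Fin n)),
        Measure.map (fun ω => fun i : Fin n => X (π i : Fin n).val ω) μ
          = Measure.map (fun ω => fun i : Fin n => X i.val ω) μ)
      ↔
    (∃ ν : Measure ℝ, IsProbabilityMeasure ν ∧ ν (Set.Icc (0:ℝ) 1) = 1 ∧
      ∀ (n : ℕ) (a : Fin n → Bool),
        μ {ω | ∀ i : Fin n, X i.val ω = a i}
          = ENNReal.ofReal (∫ p, (∏ i : Fin n, if a i then p else 1 - p) ∂ν)) := by
  constructor
  · intro h
    exact DeFinettiAux.forward hX h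
  · rintro ⟨ν, _, _, hmom⟩
    exact DeFinettiAux.backward hX ν hmom
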